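/- Let p be a prime and r ≥ 1 an integer. Then T₀ is invertible over ℚ and every entry of T₀⁻¹ is negative. -/

import Mathlib

open Finset
open scoped NNReal

/-- `M(p^r)`: the `p^r × p^r` matrix over `ℚ` whose `(i,j)` entry is `−p^{2r−1}` if `i = j`
and `p^{2ν_p(i−j)}` otherwise, where `ν_p` is the `p`-adic valuation. -/
def Mpr (p r : ℕ) : Matrix (Fin (p ^ r)) (Fin (p ^ r)) ℚ := fun i j =>
  if i = j then -(p : ℚ) ^ (2 * r - 1)
  else (p : ℚ) ^ (2 * padicValInt p ((i : ℤ) - (j : ℤ)))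

/-- `M(p^r)_{1̂,1̂}`: the matrix obtained from `M(p^r)` by deleting the row and column
indexed by `0`, with remaining rows and columns indexed by `{1, …, p^r−1}`. -/
def MprSub (p r : ℕ) :
    Matrix {i : Fin (p ^ r) // (i : ℕ) ≠ 0} {i : Fin (p ^ r) // (i : ℕ) ≠ 0} ℚ :=
  (Mpr p r).submatrix Subtype.val Subtype.val

/-- `B`: the `p^{r−1} × p^{r−1}` matrix whose diagonal entries equal `−p^{2r−1}` and whose
off-diagonal `(i,j)` entries equal `p^{2ν_p(i−j)+2}`. -/
def Bmat (p r : ℕ) : Matrix (Fin (p ^ (r - 1))) (Fin (p ^ (r - 1))) ℚ := fun i j =>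
  if i = j then -(p : ℚ) ^ (2 * r - 1)
  else (p : ℚ) ^ (2 * padicValInt p ((i : ℤ) - (j : ℤ)) + 2)

/-- `T₀`: the block matrix `[[M(p^r)_{1̂,1̂}, 𝟏], [𝟏, B]]`, where `𝟏` denotes all-ones
blocks of the appropriate sizes. -/
def T0 (p r : ℕ) :
    Matrix ({i : Fin (p ^ r) // (i : ℕ) ≠ 0} ⊕ Fin (p ^ (r - 1)))
      ({i : Fin (p ^ r) // (i : ℕ) ≠ 0} ⊕ Fin (p ^ (r - 1))) ℚ :=
  Matrix.fromBlocks (MprSub p r) (Matrix.of fun _ _ => 1) (Matrix.of fun _ _ => 1) (Bmat p r)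

/-! ### Auxiliary number-theoretic lemmas -/

lemma count_mod' (q n x : ℕ) (hq : 0 < q) (h : q ∣ n) :
    ((Finset.range n).filter (fun y => y % q = x % q)).card = n / q := by
  have himg : ((Finset.range n).filter (fun y => y % q = x % q))
      = (Finset.range (n / q)).image (fun t => t * q + x % q) := by
    ext y
    simp only [mem_filter, mem_range, mem_image]
    constructor
    · rintro ⟨hy, hmod⟩
      refine ⟨y / q, Nat.div_lt_div_of_lt_of_dvd h hy, ?_⟩
      rw [← hmod]
      exact Nat.div_add_mod' y q
    · rintro ⟨t, ht, rfl⟩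
      have h1 : (t + 1) * q ≤ n := by
        have := Nat.succ_le_of_lt ht
        calc (t+1) * q ≤ (n / q) * q := Nat.mul_le_mul_right q this
        _ = n := Nat.div_mul_cancel h
      constructor
      · have : t * q + x % q < (t + 1) * q := by
          have := Nat.mod_lt x hq
          nlinarith
        omega
      · rw [Nat.mul_comm, Nat.mul_add_mod, Nat.mod_mod_of_dvd _ dvd_rfl]
  rw [himg, Finset.card_image_of_injective _ ?_, Finset.card_range]
  intro a b hab
  simp only at hab
  exact Nat.eq_of_mul_eq_mul_right hq (by omega)

/-- coefficients for the telescoping identity `p^(2t) = ∑_{k ≤ t} aa k` -/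
noncomputable def aa (p : ℕ) : ℕ → ℝ := fun k =>
  if k = 0 then 1 else (p:ℝ)^(2*k) - (p:ℝ)^(2*(k-1))

lemma sum_aa (p t : ℕ) : ∑ k ∈ range (t+1), aa p k = (p:ℝ)^(2*t) := by
  induction t with
  | zero => simp [aa]
  | succ t ih =>
      rw [Finset.sum_range_succ, ih]
      simp only [aa, Nat.succ_ne_zero, if_false, Nat.add_sub_cancel]
      ring

lemma val_lt' (p : ℕ) (hp : p.Prime) (m : ℕ) (d : ℤ) (hd : d ≠ 0) (hlt : d.natAbs < p^m) :
    padicValInt p d < m := by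
  haveI : Fact p.Prime := ⟨hp⟩
  have h1 : p ^ padicValInt p d ∣ d.natAbs := pow_padicValNat_dvd
  have h2 : p ^ padicValInt p d ≤ d.natAbs :=
    Nat.le_of_dvd (Int.natAbs_pos.mpr hd) h1
  exact (Nat.pow_lt_pow_iff_right hp.one_lt).mp (lt_of_le_of_lt h2 hlt)

lemma expansion' (p : ℕ) (hp : p.Prime) (m : ℕ) (d : ℤ) (hd : d ≠ 0) (hlt : d.natAbs < p^m) :
    (p:ℝ)^(2 * padicValInt p d) = ∑ k ∈ range m, if (p:ℤ)^k ∣ d then aa p k else 0 := by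
  haveI : Fact p.Prime := ⟨hp⟩
  rw [Finset.sum_ite, Finset.sum_const_zero, add_zero]
  have hfil : (range m).filter (fun k => (p:ℤ)^k ∣ d) = range (padicValInt p d + 1) := by
    ext k
    simp only [mem_filter, mem_range, padicValInt_dvd_iff, Nat.lt_succ_iff]
    have := val_lt' p hp m d hd hlt
    constructor
    · rintro ⟨-, (h|h)⟩
      · exact absurd h hd
      · exact h
    · intro h; exact ⟨by omega, Or.inr h⟩
  rw [hfil, sum_aa]

lemma Fsum' (p : ℕ) (hp : 1 < p) (m : ℕ) :
    ∑ k ∈ range m, aa p k * ((p:ℝ)^(m-k) - 1) = ((p:ℝ)^(2*m) - (p:ℝ)^m)/p := by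
  have hP : (p:ℝ) ≠ 0 := by positivity
  induction m with
  | zero => simp
  | succ m ih =>
      rw [Finset.sum_range_succ]
      have hcong : ∀ k ∈ range m, aa p k * ((p:ℝ)^(m+1-k) - 1)
          = (p:ℝ) * (aa p k * ((p:ℝ)^(m-k) - 1)) + ((p:ℝ)-1) * aa p k := by
        intro k hk
        have h1 : m+1-k = (m-k)+1 := by
          have := mem_range.mp hk; omega
        rw [h1, pow_succ]; ring
      rw [Finset.sum_congr rfl hcong, Finset.sum_add_distrib, ← Finset.mul_sum,
        ← Finset.mul_sum, ih]
      have h2 : m+1-m = 1 := by omega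
      rw [h2]
      cases m with
      | zero => simp [aa]; field_simp
      | succ m' =>
          rw [sum_aa p m']
          have haa2 : aa p (m'+1) = (p:ℝ)^(2*(m'+1)) - (p:ℝ)^(2*m') := by
            simp [aa]
          rw [haa2]
          field_simp
          ring

lemma keysum' (p : ℕ) (hp : p.Prime) (m : ℕ) (x : Fin (p^m)) :
    ∑ y ∈ Finset.univ.erase x, (p:ℝ)^(2 * padicValInt p ((x:ℤ) - (y:ℤ)))
      = ((p:ℝ)^(2*m) - (p:ℝ)^m) / p := by
  have hppos : 0 < p := hp.pos
  have hsum : ∑ y ∈ Finset.univ.erase x, (p:ℝ)^(2 * padicValInt p ((x:ℤ) - (y:ℤ)))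
      = ∑ y ∈ Finset.univ.erase x, ∑ k ∈ range m,
          (if (p:ℤ)^k ∣ ((x:ℤ) - (y:ℤ)) then aa p k else 0) := by
    apply Finset.sum_congr rfl
    intro y hy
    have hxy : y ≠ x := (Finset.mem_erase.mp hy).1
    apply expansion' p hp m
    · intro h
      apply hxy
      have : (x:ℤ) = (y:ℤ) := by omega
      exact (Fin.ext (by exact_mod_cast this)).symm
    · have hx := x.isLt
      have hy' := y.isLt
      omega
  rw [hsum, Finset.sum_comm]
  have hinner : ∀ k ∈ range m,
      (∑ y ∈ Finset.univ.erase x, (if (p:ℤ)^k ∣ ((x:ℤ) - (y:ℤ)) then aa p k else 0))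
        = aa p k * ((p:ℝ)^(m-k) - 1) := by
    intro k hk
    have hk' : k < m := mem_range.mp hk
    rw [Finset.sum_erase_eq_sub (mem_univ x)]
    have hx0 : (if (p:ℤ)^k ∣ ((x:ℤ) - (x:ℤ)) then aa p k else 0) = aa p k := by simp
    rw [hx0]
    have hfull : (∑ y : Fin (p^m), (if (p:ℤ)^k ∣ ((x:ℤ) - (y:ℤ)) then aa p k else 0))
        = ∑ y ∈ range (p^m), (if (p:ℤ)^k ∣ ((x:ℤ) - (y:ℤ)) then aa p k else 0) :=
      Fin.sum_univ_eq_sum_range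
        (fun y : ℕ => if (p:ℤ)^k ∣ ((x:ℤ) - (y:ℤ)) then aa p k else 0) (p^m)
    rw [hfull]
    have hcond : ∀ y : ℕ, ((p:ℤ)^k ∣ ((x:ℤ) - (y:ℤ))) ↔ (y % p^k = x % p^k) := by
      intro y
      have hcast : ((p:ℤ)^k) = ((p^k : ℕ) : ℤ) := by push_cast; ring
      rw [hcast, ← Nat.modEq_iff_dvd]
      rfl
    simp_rw [hcond]
    rw [Finset.sum_ite, Finset.sum_const_zero, add_zero, Finset.sum_const, nsmul_eq_mul]
    rw [count_mod' (p^k) (p^m) x (pow_pos hppos k) (pow_dvd_pow p hk'.le)]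
    rw [Nat.pow_div hk'.le hppos]
    push_cast
    ring
  rw [Finset.sum_congr rfl hinner, Fsum' p hp.one_lt m]

/-! ### Normed-ring infrastructure for matrices (sup of L1-row norms) -/

attribute [local instance] Matrix.linftyOpNormedAddCommGroup Matrix.linftyOpNormedRing
  Matrix.linftyOpNormedSpace

noncomputable instance matCompl {ι : Type*} [Fintype ι] : CompleteSpace (Matrix ι ι ℝ) :=
  FiniteDimensional.complete ℝ (Matrix ι ι ℝ)

lemma entry_le_norm {ι : Type*} [Fintype ι] (M : Matrix ι ι ℝ) (i j : ι) :
    ‖M i j‖₊ ≤ ‖M‖₊ := by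
  rw [Matrix.linfty_opNNNorm_def]
  calc ‖M i j‖₊ ≤ ∑ j', ‖M i j'‖₊ :=
        Finset.single_le_sum (f := fun j' => ‖M i j'‖₊) (fun _ _ => zero_le) (mem_univ j)
    _ ≤ _ := Finset.le_sup (f := fun i => ∑ j', ‖M i j'‖₊) (mem_univ i)

/-- evaluation of a matrix entry as a continuous linear map -/
noncomputable def evalCLM {ι : Type*} [Fintype ι] (i j : ι) : Matrix ι ι ℝ →L[ℝ] ℝ :=
  LinearMap.mkContinuous
    { toFun := fun M => M i j
      map_add' := fun _ _ => rfl
      map_smul' := fun _ _ => rfl } 1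
    (fun M => by
      rw [one_mul]
      exact_mod_cast entry_le_norm M i j)

lemma pow_entry_nonneg {ι : Type*} [Fintype ι] [DecidableEq ι] (S : Matrix ι ι ℝ)
    (h : ∀ i j, 0 ≤ S i j) (n : ℕ) : ∀ i j, 0 ≤ (S^n) i j := by
  induction n with
  | zero =>
      intro i j
      rw [pow_zero, Matrix.one_apply]
      split <;> norm_num
  | succ n ih =>
      intro i j
      rw [pow_succ, Matrix.mul_apply]
      exact Finset.sum_nonneg fun k _ => mul_nonneg (ih i k) (h k j)

lemma row1 (p r : ℕ) (hp : p.Prime) (hr : 1 ≤ r) (x : Fin (p^r)) (hx : (x:ℕ) ≠ 0)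
    (z : Fin (p^r)) (hz : (z:ℕ) = 0) :
    ∑ v ∈ Finset.univ.erase z,
      (if x = v then -(p:ℝ)^(2*r-1) else (p:ℝ)^(2*padicValInt p ((x:ℤ) - (v:ℤ))))
      ≤ -(p:ℝ)^(r-1) - 1 := by
  have hP0 : (0:ℝ) < (p:ℝ) := by exact_mod_cast hp.pos
  have hP1 : (1:ℝ) ≤ (p:ℝ) := by exact_mod_cast hp.one_le
  have hxz : x ≠ z := fun h => hx (h ▸ hz)
  rw [Finset.sum_erase_eq_sub (mem_univ z), ← Finset.add_sum_erase _ _ (mem_univ x),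
    if_pos rfl, if_neg hxz]
  have hK : ∑ v ∈ Finset.univ.erase x,
      (if x = v then -(p:ℝ)^(2*r-1) else (p:ℝ)^(2*padicValInt p ((x:ℤ) - (v:ℤ))))
      = ((p:ℝ)^(2*r) - (p:ℝ)^r)/p := by
    rw [← keysum' p hp r x]
    refine Finset.sum_congr rfl fun v hv => ?_
    exact if_neg (fun h => (mem_erase.mp hv).1 h.symm)
  rw [hK]
  have h1 : (1:ℝ) ≤ (p:ℝ)^(2*padicValInt p ((x:ℤ)-(z:ℤ))) := one_le_pow₀ hP1
  have e2r : (p:ℝ)^(2*r) = (p:ℝ)^(2*r-1) * p := by rw [← pow_succ]; congr 1; omega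
  have er : (p:ℝ)^r = (p:ℝ)^(r-1) * p := by rw [← pow_succ]; congr 1; omega
  have hKval : ((p:ℝ)^(2*r) - (p:ℝ)^r)/p = (p:ℝ)^(2*r-1) - (p:ℝ)^(r-1) := by
    rw [e2r, er]
    field_simp
  linarith

lemma row2 (p r : ℕ) (hp : p.Prime) (hr : 1 ≤ r) (x : Fin (p^(r-1))) :
    ∑ v ∈ Finset.univ.erase x, (p:ℝ)^(2*padicValInt p ((x:ℤ) - (v:ℤ)) + 2)
      ≤ (p:ℝ)^(2*r-1) - (p:ℝ)^r := by
  have hP0 : (0:ℝ) < (p:ℝ) := by exact_mod_cast hp.pos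
  have hsplit : ∀ v ∈ Finset.univ.erase x,
      (p:ℝ)^(2*padicValInt p ((x:ℤ) - (v:ℤ)) + 2)
      = (p:ℝ)^(2*padicValInt p ((x:ℤ) - (v:ℤ))) * (p:ℝ)^2 := fun v _ => pow_add _ _ _
  rw [Finset.sum_congr rfl hsplit, ← Finset.sum_mul, keysum' p hp (r-1) x]
  have e1 : (p:ℝ)^(2*(r-1)) * p = (p:ℝ)^(2*r-1) := by rw [← pow_succ]; congr 1; omega
  have e2 : (p:ℝ)^(r-1) * p = (p:ℝ)^r := by rw [← pow_succ]; congr 1; omega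
  have h3 : ((p:ℝ)^(2*(r-1)) - (p:ℝ)^(r-1))/p * (p:ℝ)^2
      = (p:ℝ)^(2*(r-1))*p - (p:ℝ)^(r-1)*p := by
    field_simp
  rw [h3, e1, e2]


/-- For a prime `p` and integer `r ≥ 1`, `T₀` is invertible over `ℚ` and
every entry of `T₀⁻¹` is negative. -/
theorem stmt16 (p r : ℕ) (hp : p.Prime) (hr : 1 ≤ r) :
    IsUnit (T0 p r) ∧
    ∀ i j : {i : Fin (p ^ r) // (i : ℕ) ≠ 0} ⊕ Fin (p ^ (r - 1)),
      (T0 p r)⁻¹ i j < 0 := by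
  classical
  have hppos : 0 < p := hp.pos
  have hP0 : (0:ℝ) < (p:ℝ) := by exact_mod_cast hppos
  have hP1 : (1:ℝ) ≤ (p:ℝ) := by exact_mod_cast hp.one_le
  set c : ℝ := (p:ℝ)^(2*r-1) with hc
  have hcpos : 0 < c := pow_pos hP0 _
  have hcne : c ≠ 0 := hcpos.ne'
  set f : ℚ →+* ℝ := Rat.castHom ℝ with hf
  set Tr : Matrix _ _ ℝ := (T0 p r).map f with hTr
  -- entry descriptions
  have h11 : ∀ (x y : {i : Fin (p ^ r) // (i : ℕ) ≠ 0}),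
      Tr (Sum.inl x) (Sum.inl y) = if x.1 = y.1 then -c
        else (p:ℝ)^(2*padicValInt p ((x.1:ℤ) - (y.1:ℤ))) := by
    intro x y
    show ((Mpr p r x.1 y.1 : ℚ) : ℝ) = _
    unfold Mpr
    split
    · push_cast; rw [hc]
    · push_cast; norm_num
  have h12 : ∀ x y, Tr (Sum.inl x) (Sum.inr y) = 1 := by
    intro x y
    show ((1 : ℚ) : ℝ) = 1
    norm_num
  have h21 : ∀ x y, Tr (Sum.inr x) (Sum.inl y) = 1 := by
    intro x y
    show ((1 : ℚ) : ℝ) = 1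
    norm_num
  have h22 : ∀ (x y : Fin (p ^ (r-1))),
      Tr (Sum.inr x) (Sum.inr y) = if x = y then -c
        else (p:ℝ)^(2*padicValInt p ((x:ℤ) - (y:ℤ)) + 2) := by
    intro x y
    show ((Bmat p r x y : ℚ) : ℝ) = _
    unfold Bmat
    split
    · push_cast; rw [hc]
    · push_cast; norm_num
  have hdiag : ∀ i, Tr i i = -c := by
    rintro (x | x)
    · rw [h11, if_pos rfl]
    · rw [h22, if_pos rfl]
  have hoff : ∀ i j, i ≠ j → 0 < Tr i j := by
    rintro (x | x) (y | y) hne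
    · rw [h11, if_neg]
      · exact pow_pos hP0 _
      · exact fun h => hne (by rw [Sum.inl.injEq]; exact Subtype.ext h)
    · rw [h12]; norm_num
    · rw [h21]; norm_num
    · rw [h22, if_neg]
      · exact pow_pos hP0 _
      · exact fun h => hne (by rw [Sum.inr.injEq]; exact h)
  -- row sums
  have hrow : ∀ i, ∑ j ∈ Finset.univ.erase i, Tr i j ≤ c - 1 := by
    rintro (x | x)
    · rw [Finset.sum_erase_eq_sub (mem_univ _), Fintype.sum_sum_type, hdiag]
      have hz : ((⟨0, pow_pos hppos r⟩ : Fin (p^r)) : ℕ) = 0 := rfl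
      have hS1 : ∑ a : {i : Fin (p ^ r) // (i : ℕ) ≠ 0}, Tr (Sum.inl x) (Sum.inl a)
          ≤ -(p:ℝ)^(r-1) - 1 := by
        have step1 : ∑ a : {i : Fin (p ^ r) // (i : ℕ) ≠ 0}, Tr (Sum.inl x) (Sum.inl a)
            = ∑ a : {i : Fin (p ^ r) // (i : ℕ) ≠ 0},
              (if x.1 = a.1 then -c
                else (p:ℝ)^(2*padicValInt p ((x.1:ℤ) - (a.1:ℤ)))) :=
          Finset.sum_congr rfl fun a _ => h11 x a
        have step2 : ∑ v ∈ Finset.univ.erase (⟨0, pow_pos hppos r⟩ : Fin (p^r)),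
              (if x.1 = v then -c else (p:ℝ)^(2*padicValInt p ((x.1:ℤ) - (v:ℤ))))
            = ∑ a : {i : Fin (p ^ r) // (i : ℕ) ≠ 0},
              (if x.1 = a.1 then -c
                else (p:ℝ)^(2*padicValInt p ((x.1:ℤ) - (a.1:ℤ)))) := by
          apply Finset.sum_subtype
          intro v
          simp only [Finset.mem_erase, Finset.mem_univ, and_true]
          constructor
          · intro hv h0
            exact hv (Fin.ext h0)
          · intro hv h0
            exact hv (by rw [h0])
        rw [step1, ← step2, hc]
        exact row1 p r hp hr x.1 x.2 _ hz
      have hS2 : ∑ b : Fin (p ^ (r-1)), Tr (Sum.inl x) (Sum.inr b) = (p:ℝ)^(r-1) := by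
        rw [Finset.sum_congr rfl fun b _ => h12 x b, Finset.sum_const, card_univ,
          Fintype.card_fin, nsmul_eq_mul, mul_one]
        push_cast
        ring
      rw [hS2]
      linarith
    · rw [Finset.sum_erase_eq_sub (mem_univ _), Fintype.sum_sum_type, hdiag]
      have hS1 : ∑ a : {i : Fin (p ^ r) // (i : ℕ) ≠ 0}, Tr (Sum.inr x) (Sum.inl a)
          ≤ (p:ℝ)^r - 1 := by
        rw [Finset.sum_congr rfl fun a _ => h21 x a, Finset.sum_const, card_univ,
          nsmul_eq_mul, mul_one]
        have hcard : Fintype.card {i : Fin (p ^ r) // (i : ℕ) ≠ 0} < p ^ r := by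
          have := Fintype.card_subtype_lt (p := fun i : Fin (p^r) => (i:ℕ) ≠ 0)
            (x := ⟨0, pow_pos hppos r⟩) (by simp)
          simpa using this
        have : (Fintype.card {i : Fin (p ^ r) // (i : ℕ) ≠ 0} : ℝ) + 1 ≤ ((p^r : ℕ) : ℝ) := by
          exact_mod_cast hcard
        push_cast at this ⊢
        linarith
      have hS2 : ∑ b : Fin (p ^ (r-1)), Tr (Sum.inr x) (Sum.inr b)
          ≤ -c + (c - (p:ℝ)^r) := by
        rw [Finset.sum_congr rfl fun b _ => h22 x b,
          ← Finset.add_sum_erase _ _ (mem_univ x), if_pos rfl]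
        have hK : ∑ v ∈ Finset.univ.erase x,
            (if x = v then -c else (p:ℝ)^(2*padicValInt p ((x:ℤ) - (v:ℤ)) + 2))
            ≤ c - (p:ℝ)^r := by
          have : ∀ v ∈ Finset.univ.erase x,
              (if x = v then -c else (p:ℝ)^(2*padicValInt p ((x:ℤ) - (v:ℤ)) + 2))
              = (p:ℝ)^(2*padicValInt p ((x:ℤ) - (v:ℤ)) + 2) := by
            intro v hv
            exact if_neg (fun h => (mem_erase.mp hv).1 h.symm)
          rw [Finset.sum_congr rfl this, hc]
          exact row2 p r hp hr x
        linarith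
      linarith
  -- the iteration matrix S
  set S : Matrix _ _ ℝ := Matrix.of fun i j => if i = j then (0:ℝ) else Tr i j / c with hS
  have hS_apply : ∀ i j, S i j = if i = j then (0:ℝ) else Tr i j / c := fun _ _ => rfl
  have hT : Tr = (-c) • ((1 : Matrix _ _ ℝ) - S) := by
    ext i j
    rw [Matrix.smul_apply, Matrix.sub_apply, Matrix.one_apply, hS_apply, smul_eq_mul]
    by_cases h : i = j
    · subst h
      rw [if_pos rfl, if_pos rfl, hdiag]
      ring
    · rw [if_neg h, if_neg h]
      field_simp
      ring
  have hSnn : ∀ i j, 0 ≤ S i j := by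
    intro i j
    rw [hS_apply]
    split
    · exact le_refl _
    · exact div_nonneg (hoff i j (by assumption)).le hcpos.le
  have hSrow : ∀ i, ∑ j, ‖S i j‖ < 1 := by
    intro i
    have h1 : ∀ j, ‖S i j‖ = S i j := fun j => Real.norm_of_nonneg (hSnn i j)
    rw [Finset.sum_congr rfl fun j _ => h1 j]
    rw [← Finset.add_sum_erase _ _ (mem_univ i)]
    simp only [Matrix.of_apply, if_true]
    rw [zero_add]
    have h2 : ∀ j ∈ Finset.univ.erase i,
        (if i = j then (0:ℝ) else Tr i j / c) = Tr i j / c := by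
      intro j hj
      rw [if_neg (fun h => (mem_erase.mp hj).1 h.symm)]
    rw [Finset.sum_congr rfl h2, ← Finset.sum_div]
    rw [div_lt_one hcpos]
    have := hrow i
    linarith
  have hSnorm : ‖S‖ < 1 := by
    rw [Matrix.linfty_opNorm_def, show (1:ℝ) = ((1:ℝ≥0):ℝ) from rfl, NNReal.coe_lt_coe]
    refine (Finset.sup_lt_iff (by norm_num)).mpr ?_
    intro i _
    rw [← NNReal.coe_lt_coe, NNReal.coe_sum]
    simp only [coe_nnnorm, NNReal.coe_one]
    exact hSrow i
  -- geometric series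
  have hsummable : Summable (fun n : ℕ => S ^ n) := summable_geometric_of_norm_lt_one hSnorm
  have hmulW : (1 - S) * (∑' n : ℕ, S ^ n) = 1 := mul_neg_geom_series S hSnorm
  have hWmul : (∑' n : ℕ, S ^ n) * (1 - S) = 1 := geom_series_mul_neg S hSnorm
  set W : Matrix _ _ ℝ := ∑' n : ℕ, S ^ n with hW
  set V : Matrix _ _ ℝ := (-c)⁻¹ • W with hV
  have hcne' : (-c) ≠ 0 := neg_ne_zero.mpr hcne
  have hTV : Tr * V = 1 := by
    rw [hT, hV, Matrix.smul_mul, Matrix.mul_smul, smul_smul, mul_inv_cancel₀ hcne',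
      one_smul, hmulW]
  have hVT : V * Tr = 1 := by
    rw [hT, hV, Matrix.smul_mul, Matrix.mul_smul, smul_smul, inv_mul_cancel₀ hcne',
      one_smul, hWmul]
  have hUnitTr : IsUnit Tr := ⟨⟨Tr, V, hTV, hVT⟩, rfl⟩
  have hdetQ : IsUnit (T0 p r).det := by
    have h1 : IsUnit Tr.det := (Matrix.isUnit_iff_isUnit_det Tr).mp hUnitTr
    rw [hTr] at h1
    rw [isUnit_iff_ne_zero] at h1 ⊢
    intro h0
    apply h1
    rw [show ((T0 p r).map ⇑f) = f.mapMatrix (T0 p r) from rfl, ← RingHom.map_det, h0]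
    simp
  have hUnitT0 : IsUnit (T0 p r) := (Matrix.isUnit_iff_isUnit_det _).mpr hdetQ
  refine ⟨hUnitT0, ?_⟩
  have hQ : T0 p r * (T0 p r)⁻¹ = 1 := Matrix.mul_nonsing_inv _ hdetQ
  have hmap : Tr * ((T0 p r)⁻¹).map f = 1 := by
    rw [hTr, ← Matrix.map_mul, hQ]
    exact Matrix.map_one _ (map_zero f) (map_one f)
  have hinv_eq : ((T0 p r)⁻¹).map f = V :=
    (Matrix.inv_eq_right_inv hmap).symm.trans (Matrix.inv_eq_right_inv hTV)
  have hWpos : ∀ i j, 0 < W i j := by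
    intro i j
    have hentry : HasSum (fun n : ℕ => (S ^ n) i j) (W i j) := by
      have := (evalCLM i j).hasSum hsummable.hasSum
      exact this
    by_cases h : i = j
    · subst h
      have h0 : (1:ℝ) ≤ W i i := by
        have := le_hasSum hentry 0 (fun n _ => pow_entry_nonneg S hSnn n i i)
        simpa using this
      linarith
    · have h0 : S i j ≤ W i j := by
        have := le_hasSum hentry 1 (fun n _ => pow_entry_nonneg S hSnn n i j)
        simpa using this
      have h1 : 0 < S i j := by
        rw [hS_apply, if_neg h]
        exact div_pos (hoff i j h) hcpos
      linarith
  intro i j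
  have hVneg : V i j < 0 := by
    rw [hV, Matrix.smul_apply, smul_eq_mul]
    have h1 : (-c)⁻¹ < 0 := inv_lt_zero.mpr (by linarith)
    exact mul_neg_of_neg_of_pos h1 (hWpos i j)
  have hcast : (((T0 p r)⁻¹ i j : ℚ) : ℝ) = V i j := by
    rw [← hinv_eq]
    rfl
  have : (((T0 p r)⁻¹ i j : ℚ) : ℝ) < 0 := by rw [hcast]; exact hVneg
  exact_mod_cast this
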